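/- arXiv:1608.08039 — 3 statements merged into one kernel-verified Lean document; each statement's English description precedes it below -/
import Mathlib

section
/- Let F, A ∈ ℝ^{m×n}, H ∈ ℝ^{p×n}, and let I = [0, t₁]. Suppose (x, f, y, η) is a solution of the DAE d(Fx)/dt = Ax + f, y = Hx + η on I, and (q, u) is a solution of the dual DAE d(Fᵀq)/dt = Aᵀq − Hᵀu on I with Fᵀq(t₁) absolutely continuous. Define w(s) = q(t₁ − s). Then ℓᵀFx(t₁) − ∫₀^{t₁} yᵀ(t)U(t)dt = (Fx(0))ᵀ(F⁺)ᵀFᵀw(0) + ∫₀^{t₁} (wᵀ(t)f(t) − Uᵀ(t)η(t) + bᵀ(t)x(t)) dt, where U(s) = u(t₁−s), Fᵀw(t₁) = Fᵀℓ, and b(t) = d(Fᵀw)(t)/dt + Aᵀw(t) − HᵀU(t). -/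
open Matrix MeasureTheory

/-- `Fp` is the Moore–Penrose pseudoinverse of `F`. -/
def IsMoorePenrose {m n : ℕ} (F : Matrix (Fin m) (Fin n) ℝ)
    (Fp : Matrix (Fin n) (Fin m) ℝ) : Prop :=
  F * Fp * F = F ∧ Fp * F * Fp = Fp ∧ (F * Fp)ᵀ = F * Fp ∧ (Fp * F)ᵀ = Fp * F

open Set Filter

lemma aux_ae_zero {h : ℝ → ℝ} (hi : Integrable h volume)
    (hz : ∀ c : ℝ, ∫ s in Set.Iio c, h s = 0) : h =ᵐ[volume] 0 := by
  have total : ∫ s, h s = 0 := by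
    have h2 : (⋃ n : ℕ, Set.Iio (n : ℝ)) = Set.univ := by
      ext x; simpa using (exists_nat_gt x).imp fun n hn => hn
    have h1 := tendsto_setIntegral_of_monotone (f := h) (μ := volume)
      (s := fun n : ℕ => Set.Iio (n : ℝ)) (fun _ => measurableSet_Iio)
      (fun i j hij => Iio_subset_Iio (by exact_mod_cast hij)) (by rw [h2]; exact hi.integrableOn)
    simp only [hz, h2, Measure.restrict_univ] at h1
    exact (tendsto_nhds_unique tendsto_const_nhds h1).symm
  have key : ∀ ⦃s : Set ℝ⦄, MeasurableSet s → ∫ x in s, h x = 0 := by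
    refine MeasurableSpace.induction_on_inter
      (borel_eq_generateFrom_Iio ℝ) isPiSystem_Iio (by simp) ?_ ?_ ?_
    · rintro t ⟨c, rfl⟩; exact hz c
    · intro t ht h0
      have hsum := integral_add_compl ht hi
      rw [h0, zero_add, total] at hsum; exact hsum
    · intro f hd hm h0
      rw [integral_iUnion hm hd hi.integrableOn]
      simp [h0]
  exact hi.ae_eq_zero_of_forall_setIntegral_eq_zero fun s hs _ => key hs

lemma aux_prim_cont {b : ℝ → ℝ} (hb : Integrable b volume) :
    Continuous fun t => ∫ s in Set.Iic t, b s := by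
  have : ∀ t : ℝ, ∫ s in Set.Iic t, b s
      = (∫ s in Set.Iic (0:ℝ), b s) + ∫ s in (0:ℝ)..t, b s := by
    intro t
    rw [← intervalIntegral.integral_Iic_sub_Iic hb.integrableOn hb.integrableOn]
    ring
  rw [show (fun t => ∫ s in Set.Iic t, b s) = fun t => (∫ s in Set.Iic (0:ℝ), b s) + ∫ s in (0:ℝ)..t, b s from funext this]
  exact continuous_const.add (hb.continuous_primitive 0)

lemma aux_prim_bdd {b : ℝ → ℝ} (hb : Integrable b volume) :
    ∃ C, ∀ t : ℝ, ‖∫ s in Set.Iic t, b s‖ ≤ C := by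
  refine ⟨∫ s, ‖b s‖, fun t => ?_⟩
  calc ‖∫ s in Set.Iic t, b s‖ ≤ ∫ s in Set.Iic t, ‖b s‖ :=
        norm_integral_le_integral_norm _
    _ ≤ ∫ s, ‖b s‖ :=
        setIntegral_le_integral hb.norm (ae_of_all _ fun x => norm_nonneg _)

lemma aux_mul_prim_int {a b : ℝ → ℝ} (ha : Integrable a volume) (hb : Integrable b volume) :
    Integrable (fun t => a t * ∫ s in Set.Iic t, b s) volume := by
  have := Integrable.bdd_mul (f := fun t => ∫ s in Set.Iic t, b s) (g := a) ha
    (aux_prim_cont hb).aestronglyMeasurable (ae_of_all _ (aux_prim_bdd hb).choose_spec)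
  simpa [mul_comm] using this

lemma aux_prim_mul_int {a b : ℝ → ℝ} (ha : Integrable a volume) (hb : Integrable b volume) :
    Integrable (fun t => (∫ s in Set.Iic t, a s) * b t) volume :=
  Integrable.bdd_mul hb (aux_prim_cont ha).aestronglyMeasurable (ae_of_all _ (aux_prim_bdd ha).choose_spec)

lemma aux_parts {a b : ℝ → ℝ} (ha : Integrable a volume) (hb : Integrable b volume) :
    (∫ t, a t * ∫ s in Set.Iic t, b s) + (∫ t, (∫ s in Set.Iic t, a s) * b t)
      = (∫ t, a t) * (∫ t, b t) := by
  set K : Set (ℝ × ℝ) := {p | p.2 ≤ p.1} with hKdef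
  have hK : MeasurableSet K := measurableSet_le measurable_snd measurable_fst
  have hF : Integrable (fun p : ℝ × ℝ => a p.1 * b p.2) (volume.prod volume) :=
    ha.mul_prod hb
  have T1 : ∫ p in K, a p.1 * b p.2 ∂(volume.prod volume)
      = ∫ t, a t * ∫ s in Set.Iic t, b s := by
    rw [← integral_indicator hK, integral_prod _ (hF.indicator hK)]
    congr 1
    funext t
    have h1 : (fun s => K.indicator (fun p : ℝ × ℝ => a p.1 * b p.2) (t, s))
        = (Set.Iic t).indicator fun s => a t * b s := by
      funext s
      by_cases h : s ≤ t <;> simp [Set.indicator, hKdef, h]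
    rw [h1, integral_indicator measurableSet_Iic, integral_const_mul]
  have T2 : ∫ p in Kᶜ, a p.1 * b p.2 ∂(volume.prod volume)
      = ∫ t, (∫ s in Set.Iic t, a s) * b t := by
    rw [← integral_indicator hK.compl, integral_prod_symm _ (hF.indicator hK.compl)]
    congr 1
    funext s
    have h1 : (fun t => Kᶜ.indicator (fun p : ℝ × ℝ => a p.1 * b p.2) (t, s))
        = (Set.Iio s).indicator fun t => a t * b s := by
      funext t
      by_cases h : t < s <;> simp [Set.indicator, hKdef, not_le, h]
    rw [h1, integral_indicator measurableSet_Iio, integral_mul_const]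
    congr 1
    exact setIntegral_congr_set Iio_ae_eq_Iic
  rw [T1.symm, T2.symm, ← integral_prod_mul, ← integral_add_compl hK hF]

lemma aux_II_comp {E F : Type*} [NormedAddCommGroup E] [NormedSpace ℝ E]
    [NormedAddCommGroup F] [NormedSpace ℝ F] (L : E →L[ℝ] F) {φ : ℝ → E} {a b : ℝ}
    (h : IntervalIntegrable φ volume a b) : IntervalIntegrable (fun t => L (φ t)) volume a b :=
  ⟨L.integrable_comp h.1, L.integrable_comp h.2⟩

lemma aux_dot {k l : ℕ} (M : Matrix (Fin k) (Fin l) ℝ) (z : Fin l → ℝ) (v : Fin k → ℝ) :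
    M.mulVec z ⬝ᵥ v = z ⬝ᵥ Mᵀ.mulVec v := by
  rw [dotProduct_comm, Matrix.dotProduct_mulVec, Matrix.mulVec_transpose,
    dotProduct_comm]

lemma aux_eval {k : ℕ} {φ : ℝ → Fin k → ℝ} {a b : ℝ}
    (h : IntervalIntegrable φ volume a b) (i : Fin k) :
    (∫ t in a..b, φ t) i = ∫ t in a..b, φ t i :=
  ((ContinuousLinearMap.proj (R := ℝ) (φ := fun _ : Fin k => ℝ) i).intervalIntegral_comp_comm
    h).symm

lemma aux_eval_II {k : ℕ} {φ : ℝ → Fin k → ℝ} {a b : ℝ}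
    (h : IntervalIntegrable φ volume a b) (i : Fin k) :
    IntervalIntegrable (fun t => φ t i) volume a b :=
  aux_II_comp (ContinuousLinearMap.proj (R := ℝ) (φ := fun _ : Fin k => ℝ) i) h

lemma aux_mv_int {k l : ℕ} (M : Matrix (Fin k) (Fin l) ℝ) {φ : ℝ → Fin l → ℝ} {a b : ℝ}
    (h : IntervalIntegrable φ volume a b) :
    IntervalIntegrable (fun t => M.mulVec (φ t)) volume a b :=
  aux_II_comp (LinearMap.toContinuousLinearMap M.mulVecLin) h

lemma aux_mv_comm {k l : ℕ} (M : Matrix (Fin k) (Fin l) ℝ) {φ : ℝ → Fin l → ℝ} {a b : ℝ}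
    (h : IntervalIntegrable φ volume a b) :
    (∫ t in a..b, M.mulVec (φ t)) = M.mulVec (∫ t in a..b, φ t) :=
  (LinearMap.toContinuousLinearMap M.mulVecLin).intervalIntegral_comp_comm h

lemma aux_mono {k : ℕ} {t₁ : ℝ} (ht : 0 ≤ t₁) {h : ℝ → Fin k → ℝ}
    (hint : IntervalIntegrable h volume 0 t₁) {c : ℝ} (hc : c ∈ Set.Icc (0:ℝ) t₁) :
    IntervalIntegrable h volume 0 c :=
  hint.mono_set (Set.uIcc_subset_uIcc (Set.left_mem_uIcc)
    (by rw [Set.uIcc_of_le ht]; exact hc))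

lemma aux_range_ae {k : ℕ} {t₁ : ℝ} (ht : 0 ≤ t₁) {h : ℝ → Fin k → ℝ}
    (hint : IntervalIntegrable h volume 0 t₁)
    (hzero : ∀ t ∈ Set.Icc (0:ℝ) t₁, ∫ s in (0:ℝ)..t, h s = 0) :
    ∀ᵐ t ∂(volume.restrict (Set.Ioc 0 t₁)), h t = 0 := by
  have hS : MeasurableSet (Set.Ioc (0:ℝ) t₁) := measurableSet_Ioc
  have comp : ∀ i : Fin k, ∀ᵐ t ∂(volume.restrict (Set.Ioc 0 t₁)), h t i = 0 := by
    intro i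
    set hi : ℝ → ℝ := (Set.Ioc (0:ℝ) t₁).indicator (fun s => h s i) with hidef
    have hii : Integrable hi volume := ((aux_eval_II hint i).1).integrable_indicator hS
    have hcomp : ∀ c ∈ Set.Icc (0:ℝ) t₁, ∫ s in (0:ℝ)..c, h s i = 0 := by
      intro c hc
      rw [← aux_eval (aux_mono ht hint hc) i, hzero c hc]
      rfl
    have hzi : ∀ c : ℝ, ∫ s in Set.Iio c, hi s = 0 := by
      intro c
      have step : ∫ s in Set.Iio c, hi s = ∫ s in Set.Ioc 0 t₁ ∩ Set.Iio c, h s i := by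
        rw [hidef, integral_indicator hS, Measure.restrict_restrict hS]
      rcases le_or_gt c 0 with hc | hc
      · have : Set.Ioc 0 t₁ ∩ Set.Iio c = (∅ : Set ℝ) := by
          ext z
          simp only [Set.mem_inter_iff, Set.mem_Ioc, Set.mem_Iio, Set.mem_empty_iff_false,
            iff_false, not_and]
          rintro ⟨h1, _⟩ h3; linarith
        rw [step, this]; simp
      rcases le_or_gt c t₁ with hc2 | hc2
      · have : Set.Ioc 0 t₁ ∩ Set.Iio c = Set.Ioo 0 c := by
          ext z
          simp only [Set.mem_inter_iff, Set.mem_Ioc, Set.mem_Iio, Set.mem_Ioo]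
          constructor
          · rintro ⟨⟨h1, _⟩, h3⟩; exact ⟨h1, h3⟩
          · rintro ⟨h1, h3⟩; exact ⟨⟨h1, by linarith⟩, h3⟩
        rw [step, this, ← MeasureTheory.integral_Ioc_eq_integral_Ioo,
          ← intervalIntegral.integral_of_le hc.le]
        exact hcomp c ⟨hc.le, hc2⟩
      · have : Set.Ioc 0 t₁ ∩ Set.Iio c = Set.Ioc 0 t₁ := by
          apply Set.inter_eq_self_of_subset_left
          intro z hz; exact lt_of_le_of_lt hz.2 hc2
        rw [step, this, ← intervalIntegral.integral_of_le ht]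
        exact hcomp t₁ ⟨ht, le_refl _⟩
    have h0 := aux_ae_zero hii hzi
    have h2 := ae_restrict_of_ae (s := Set.Ioc (0:ℝ) t₁) h0
    filter_upwards [h2, self_mem_ae_restrict hS] with s hs1 hs2
    rw [hidef] at hs1
    simpa [Set.indicator_of_mem hs2] using hs1
  filter_upwards [MeasureTheory.ae_all_iff.2 comp] with t ht'
  funext i; exact ht' i

lemma aux_parts_vec {k : ℕ} {t₁ : ℝ} (ht : 0 ≤ t₁) {P X DP DX : ℝ → Fin k → ℝ}
    (hDP : IntervalIntegrable DP volume 0 t₁) (hDX : IntervalIntegrable DX volume 0 t₁)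
    (hP : ∀ t ∈ Set.Icc (0:ℝ) t₁, P t = P 0 + ∫ s in (0:ℝ)..t, DP s)
    (hX : ∀ t ∈ Set.Icc (0:ℝ) t₁, X t = X 0 + ∫ s in (0:ℝ)..t, DX s) :
    ∫ t in Set.Ioc 0 t₁, (DP t ⬝ᵥ X t + P t ⬝ᵥ DX t)
      = P t₁ ⬝ᵥ X t₁ - P 0 ⬝ᵥ X 0 := by
  have hS : MeasurableSet (Set.Ioc (0:ℝ) t₁) := measurableSet_Ioc
  set S := Set.Ioc (0:ℝ) t₁ with hSdef
  have hsub : S ⊆ Set.Icc 0 t₁ := Set.Ioc_subset_Icc_self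
  set aI : Fin k → ℝ → ℝ := fun i => S.indicator (fun t => DP t i) with haIdef
  set bI : Fin k → ℝ → ℝ := fun i => S.indicator (fun t => DX t i) with hbIdef
  have haI : ∀ i, Integrable (aI i) volume :=
    fun i => ((aux_eval_II hDP i).1).integrable_indicator hS
  have hbI : ∀ i, Integrable (bI i) volume :=
    fun i => ((aux_eval_II hDX i).1).integrable_indicator hS
  -- total integrals
  have hPt₁ : (∫ s in (0:ℝ)..t₁, DP s) = P t₁ - P 0 := by
    rw [hP t₁ ⟨ht, le_refl _⟩]; abel
  have hXt₁ : (∫ s in (0:ℝ)..t₁, DX s) = X t₁ - X 0 := by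
    rw [hX t₁ ⟨ht, le_refl _⟩]; abel
  have intS' : ∀ i, ∫ t in S, DP t i = (P t₁ - P 0) i := fun i => by
    rw [hSdef, ← intervalIntegral.integral_of_le ht, ← aux_eval hDP i, hPt₁]
  have intSb' : ∀ i, ∫ t in S, DX t i = (X t₁ - X 0) i := fun i => by
    rw [hSdef, ← intervalIntegral.integral_of_le ht, ← aux_eval hDX i, hXt₁]
  have intS : ∀ i, ∫ t, aI i t = (P t₁ - P 0) i := fun i => by
    rw [haIdef]; rw [integral_indicator hS]; exact intS' i
  have intSb : ∀ i, ∫ t, bI i t = (X t₁ - X 0) i := fun i => by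
    rw [hbIdef]; rw [integral_indicator hS]; exact intSb' i
  -- primitives on S
  have hinter : ∀ t ∈ Set.Icc (0:ℝ) t₁, S ∩ Set.Iic t = Set.Ioc 0 t := by
    intro t htt
    ext z
    simp only [hSdef, Set.mem_inter_iff, Set.mem_Ioc, Set.mem_Iic]
    constructor
    · rintro ⟨⟨h1, _⟩, h3⟩; exact ⟨h1, h3⟩
    · rintro ⟨h1, h3⟩; exact ⟨⟨h1, le_trans h3 htt.2⟩, h3⟩
  have prim : ∀ i, ∀ t ∈ Set.Icc (0:ℝ) t₁,
      (∫ s in Set.Iic t, bI i s) = (X t - X 0) i := by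
    intro i t htt
    rw [hbIdef, integral_indicator hS, Measure.restrict_restrict hS, hinter t htt,
      ← intervalIntegral.integral_of_le htt.1, ← aux_eval (aux_mono ht hDX htt) i]
    rw [hX t htt]
    simp
  have prima : ∀ i, ∀ t ∈ Set.Icc (0:ℝ) t₁,
      (∫ s in Set.Iic t, aI i s) = (P t - P 0) i := by
    intro i t htt
    rw [haIdef, integral_indicator hS, Measure.restrict_restrict hS, hinter t htt,
      ← intervalIntegral.integral_of_le htt.1, ← aux_eval (aux_mono ht hDP htt) i]
    rw [hP t htt]
    simp
  -- summed parts identity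
  have Esum : ∑ i : Fin k, ((∫ t, aI i t * ∫ s in Set.Iic t, bI i s)
        + (∫ t, (∫ s in Set.Iic t, aI i s) * bI i t))
      = ∑ i : Fin k, (∫ t, aI i t) * (∫ t, bI i t) :=
    Finset.sum_congr rfl fun i _ => aux_parts (haI i) (hbI i)
  have R1 : ∑ i : Fin k, (∫ t, aI i t) * (∫ t, bI i t)
      = (P t₁ - P 0) ⬝ᵥ (X t₁ - X 0) := by
    simp only [intS, intSb, dotProduct]
  have L1 : ∑ i : Fin k, (∫ t, aI i t * ∫ s in Set.Iic t, bI i s)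
      = ∫ t in S, DP t ⬝ᵥ (X t - X 0) := by
    rw [← integral_finset_sum _ (fun i _ => aux_mul_prim_int (haI i) (hbI i)),
      ← integral_indicator hS]
    congr 1
    funext t
    by_cases htS : t ∈ S
    · rw [Set.indicator_of_mem htS]
      simp only [haIdef, Set.indicator_of_mem htS, dotProduct]
      exact Finset.sum_congr rfl fun i _ => by rw [prim i t (hsub htS)]
    · rw [Set.indicator_of_notMem htS]
      simp [haIdef, Set.indicator_of_notMem htS]
  have L2 : ∑ i : Fin k, (∫ t, (∫ s in Set.Iic t, aI i s) * bI i t)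
      = ∫ t in S, (P t - P 0) ⬝ᵥ DX t := by
    rw [← integral_finset_sum _ (fun i _ => aux_prim_mul_int (haI i) (hbI i)),
      ← integral_indicator hS]
    congr 1
    funext t
    by_cases htS : t ∈ S
    · rw [Set.indicator_of_mem htS]
      simp only [hbIdef, Set.indicator_of_mem htS, dotProduct]
      exact Finset.sum_congr rfl fun i _ => by rw [prima i t (hsub htS)]
    · rw [Set.indicator_of_notMem htS]
      simp [hbIdef, Set.indicator_of_notMem htS]
  rw [Finset.sum_add_distrib, L1, L2, R1] at Esum
  -- integrability of the pieces on S
  have hdot1 : (fun t => DP t ⬝ᵥ (X t - X 0)) = fun t => ∑ i : Fin k, DP t i * (X t - X 0) i := by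
    funext t; simp [dotProduct]
  have hI1 : IntegrableOn (fun t => DP t ⬝ᵥ (X t - X 0)) S volume := by
    have hglob : Integrable (fun t => ∑ i : Fin k, aI i t * ∫ s in Set.Iic t, bI i s) volume :=
      integrable_finset_sum _ (fun i _ => aux_mul_prim_int (haI i) (hbI i))
    refine (hglob.integrableOn).congr_fun ?_ hS
    intro t htS
    simp only [haIdef, Set.indicator_of_mem htS, dotProduct]
    exact Finset.sum_congr rfl fun i _ => by rw [prim i t (hsub htS)]
  have hI2 : IntegrableOn (fun t => (P t - P 0) ⬝ᵥ DX t) S volume := by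
    have hglob : Integrable (fun t => ∑ i : Fin k, (∫ s in Set.Iic t, aI i s) * bI i t) volume :=
      integrable_finset_sum _ (fun i _ => aux_prim_mul_int (haI i) (hbI i))
    refine (hglob.integrableOn).congr_fun ?_ hS
    intro t htS
    simp only [hbIdef, Set.indicator_of_mem htS, dotProduct]
    exact Finset.sum_congr rfl fun i _ => by rw [prima i t (hsub htS)]
  have hI3 : IntegrableOn (fun t => DP t ⬝ᵥ X 0) S volume := by
    have : (fun t => DP t ⬝ᵥ X 0) = fun t => ∑ i : Fin k, DP t i * X 0 i := by
      funext t; simp [dotProduct]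
    rw [this]
    exact integrable_finset_sum _ (fun i _ => ((aux_eval_II hDP i).1).mul_const _)
  have hI4 : IntegrableOn (fun t => P 0 ⬝ᵥ DX t) S volume := by
    have : (fun t => P 0 ⬝ᵥ DX t) = fun t => ∑ i : Fin k, P 0 i * DX t i := by
      funext t; simp [dotProduct]
    rw [this]
    exact integrable_finset_sum _ (fun i _ => ((aux_eval_II hDX i).1).const_mul _)
  -- constant integrals
  have C1 : ∫ t in S, DP t ⬝ᵥ X 0 = (P t₁ - P 0) ⬝ᵥ X 0 := by
    have h1 : (fun t => DP t ⬝ᵥ X 0) = fun t => ∑ i : Fin k, DP t i * X 0 i := by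
      funext t; simp [dotProduct]
    rw [h1, integral_finset_sum _ (fun i _ => ((aux_eval_II hDP i).1).mul_const _)]
    simp only [dotProduct]
    exact Finset.sum_congr rfl fun i _ => by rw [integral_mul_const, intS' i]
  have C2 : ∫ t in S, P 0 ⬝ᵥ DX t = P 0 ⬝ᵥ (X t₁ - X 0) := by
    have h1 : (fun t => P 0 ⬝ᵥ DX t) = fun t => ∑ i : Fin k, P 0 i * DX t i := by
      funext t; simp [dotProduct]
    rw [h1, integral_finset_sum _ (fun i _ => ((aux_eval_II hDX i).1).const_mul _)]
    simp only [dotProduct]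
    exact Finset.sum_congr rfl fun i _ => by rw [integral_const_mul, intSb' i]
  -- final assembly
  have split : ∫ t in S, (DP t ⬝ᵥ X t + P t ⬝ᵥ DX t)
      = (∫ t in S, DP t ⬝ᵥ (X t - X 0)) + (∫ t in S, (P t - P 0) ⬝ᵥ DX t)
        + ((∫ t in S, DP t ⬝ᵥ X 0) + (∫ t in S, P 0 ⬝ᵥ DX t)) := by
    have hpt : (fun t => DP t ⬝ᵥ X t + P t ⬝ᵥ DX t)
        = fun t => (DP t ⬝ᵥ (X t - X 0) + (P t - P 0) ⬝ᵥ DX t)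
          + (DP t ⬝ᵥ X 0 + P 0 ⬝ᵥ DX t) := by
      funext t
      simp only [dotProduct_sub, sub_dotProduct]
      ring
    have hI12 : IntegrableOn
        (fun t => DP t ⬝ᵥ (X t - X 0) + (P t - P 0) ⬝ᵥ DX t) S volume := hI1.add hI2
    have hI34 : IntegrableOn
        (fun t => DP t ⬝ᵥ X 0 + P 0 ⬝ᵥ DX t) S volume := hI3.add hI4
    rw [hpt, integral_add hI12 hI34, integral_add hI1 hI2, integral_add hI3 hI4]
  rw [split, Esum, C1, C2]
  simp only [dotProduct_sub, sub_dotProduct]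
  ring

/-- Integration-by-parts identity relating a solution `(x,f,y,η)` of the primal DAE
`d(Fx)/dt = Ax + f, y = Hx + η` on `[0,t₁]` and a solution `(q,u)` of the dual DAE
`d(Fᵀq)/dt = Aᵀq − Hᵀu`, with `w(s) = q(t₁−s)`, `U(s) = u(t₁−s)`, `Fᵀw(t₁) = Fᵀℓ` and
`b = d(Fᵀw)/dt + Aᵀw − HᵀU`:
`ℓᵀFx(t₁) − ∫₀^{t₁} yᵀU = (Fx(0))ᵀ(F⁺)ᵀFᵀw(0) + ∫₀^{t₁} (wᵀf − Uᵀη + bᵀx)`. -/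
theorem duality_identity {m n p : ℕ}
    (F A : Matrix (Fin m) (Fin n) ℝ) (H : Matrix (Fin p) (Fin n) ℝ)
    (Fp : Matrix (Fin n) (Fin m) ℝ) (hFp : IsMoorePenrose F Fp)
    (t₁ : ℝ) (ht₁ : 0 < t₁) (ℓ : Fin m → ℝ)
    (x : ℝ → Fin n → ℝ) (f : ℝ → Fin m → ℝ) (y η : ℝ → Fin p → ℝ)
    (q w : ℝ → Fin m → ℝ) (u U : ℝ → Fin p → ℝ)
    (Dw b : ℝ → Fin n → ℝ)
    -- (x,f,y,η) is a solution of the DAE d(Fx)/dt = Ax + f, y = Hx + η on [0,t₁]: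
    (hxint : IntervalIntegrable (fun s => A.mulVec (x s) + f s) volume 0 t₁)
    (hx : ∀ t ∈ Set.Icc (0:ℝ) t₁,
      F.mulVec (x t) = F.mulVec (x 0) + ∫ s in (0:ℝ)..t, (A.mulVec (x s) + f s))
    (hy : ∀ᵐ t ∂(volume.restrict (Set.Ioc (0:ℝ) t₁)), y t = H.mulVec (x t) + η t)
    -- (q,u) is a solution of the dual DAE d(Fᵀq)/dt = Aᵀq − Hᵀu on [0,t₁]:
    (hqint : IntervalIntegrable (fun s => Aᵀ.mulVec (q s) - Hᵀ.mulVec (u s)) volume 0 t₁)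
    (hq : ∀ t ∈ Set.Icc (0:ℝ) t₁,
      Fᵀ.mulVec (q t) = Fᵀ.mulVec (q 0) + ∫ s in (0:ℝ)..t, (Aᵀ.mulVec (q s) - Hᵀ.mulVec (u s)))
    -- w and U are the time reversals of q and u:
    (hw : ∀ s, w s = q (t₁ - s)) (hU : ∀ s, U s = u (t₁ - s))
    (hwt₁ : Fᵀ.mulVec (w t₁) = Fᵀ.mulVec ℓ)
    -- Dw is the a.e. derivative of Fᵀw:
    (hDwint : IntervalIntegrable Dw volume 0 t₁)
    (hDw : ∀ t ∈ Set.Icc (0:ℝ) t₁,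
      Fᵀ.mulVec (w t) = Fᵀ.mulVec (w 0) + ∫ s in (0:ℝ)..t, Dw s)
    (hb : ∀ t, b t = Dw t + Aᵀ.mulVec (w t) - Hᵀ.mulVec (U t))
    -- integrability of the scalar integrands:
    (hiyU : IntervalIntegrable (fun t => y t ⬝ᵥ U t) volume 0 t₁)
    (hirhs : IntervalIntegrable (fun t => w t ⬝ᵥ f t - U t ⬝ᵥ η t + b t ⬝ᵥ x t) volume 0 t₁) :
    ℓ ⬝ᵥ F.mulVec (x t₁) - (∫ t in (0:ℝ)..t₁, y t ⬝ᵥ U t)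
      = F.mulVec (x 0) ⬝ᵥ Fpᵀ.mulVec (Fᵀ.mulVec (w 0))
        + ∫ t in (0:ℝ)..t₁, (w t ⬝ᵥ f t - U t ⬝ᵥ η t + b t ⬝ᵥ x t) := by
  have ht0 : (0:ℝ) ≤ t₁ := ht₁.le
  have hF1 : F * Fp * F = F := hFp.1
  have hFt : Fᵀ * Fpᵀ * Fᵀ = Fᵀ := by
    have h := congrArg Matrix.transpose hF1
    rw [Matrix.transpose_mul, Matrix.transpose_mul] at h
    rw [Matrix.mul_assoc]; exact h
  set g : ℝ → Fin m → ℝ := fun s => A.mulVec (x s) + f s with hgdef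
  set G : ℝ → Fin n → ℝ := fun s => Fp.mulVec (g s) with hGdef
  have hGint : IntervalIntegrable G volume 0 t₁ := aux_mv_int Fp hxint
  set X : ℝ → Fin n → ℝ := fun t => Fp.mulVec (F.mulVec (x t)) with hXdef
  set P : ℝ → Fin n → ℝ := fun t => Fᵀ.mulVec (w t) with hPdef
  -- primal integral form for X
  have hg : ∀ t ∈ Set.Icc (0:ℝ) t₁,
      (∫ s in (0:ℝ)..t, g s) = F.mulVec (x t) - F.mulVec (x 0) := by
    intro t htt; rw [hx t htt]; abel
  have hXc : ∀ t ∈ Set.Icc (0:ℝ) t₁, X t = X 0 + ∫ s in (0:ℝ)..t, G s := by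
    intro t htt
    rw [hXdef, hGdef]
    simp only
    rw [hx t htt, Matrix.mulVec_add, aux_mv_comm Fp (aux_mono ht0 hxint htt)]
  have hPc : ∀ t ∈ Set.Icc (0:ℝ) t₁, P t = P 0 + ∫ s in (0:ℝ)..t, Dw s := by
    intro t htt; exact hDw t htt
  -- a.e. range facts
  have haeg : ∀ᵐ t ∂(volume.restrict (Set.Ioc (0:ℝ) t₁)), F.mulVec (G t) = g t := by
    have hzero : ∀ t ∈ Set.Icc (0:ℝ) t₁,
        ∫ s in (0:ℝ)..t, (g s - (F * Fp).mulVec (g s)) = 0 := by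
      intro t htt
      rw [intervalIntegral.integral_sub (aux_mono ht0 hxint htt)
        (aux_mv_int (F * Fp) (aux_mono ht0 hxint htt)),
        aux_mv_comm (F * Fp) (aux_mono ht0 hxint htt), hg t htt, Matrix.mulVec_sub]
      rw [Matrix.mulVec_mulVec, Matrix.mulVec_mulVec, hF1]
      abel
    have hae := aux_range_ae ht0 (hxint.sub (aux_mv_int (F * Fp) hxint)) hzero
    filter_upwards [hae] with t htz
    have h1 : g t = (F * Fp).mulVec (g t) := sub_eq_zero.mp htz
    rw [hGdef]
    simp only
    rw [Matrix.mulVec_mulVec, ← h1]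
  have haeDw : ∀ᵐ t ∂(volume.restrict (Set.Ioc (0:ℝ) t₁)),
      Fᵀ.mulVec (Fpᵀ.mulVec (Dw t)) = Dw t := by
    have hDwtot : ∀ t ∈ Set.Icc (0:ℝ) t₁,
        (∫ s in (0:ℝ)..t, Dw s) = Fᵀ.mulVec (w t) - Fᵀ.mulVec (w 0) := by
      intro t htt; rw [hDw t htt]; abel
    have hzero : ∀ t ∈ Set.Icc (0:ℝ) t₁,
        ∫ s in (0:ℝ)..t, (Dw s - (Fᵀ * Fpᵀ).mulVec (Dw s)) = 0 := by
      intro t htt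
      rw [intervalIntegral.integral_sub (aux_mono ht0 hDwint htt)
        (aux_mv_int (Fᵀ * Fpᵀ) (aux_mono ht0 hDwint htt)),
        aux_mv_comm (Fᵀ * Fpᵀ) (aux_mono ht0 hDwint htt), hDwtot t htt, Matrix.mulVec_sub]
      rw [Matrix.mulVec_mulVec, Matrix.mulVec_mulVec, hFt]
      abel
    have hae := aux_range_ae ht0 (hDwint.sub (aux_mv_int (Fᵀ * Fpᵀ) hDwint)) hzero
    filter_upwards [hae] with t htz
    have h1 : Dw t = (Fᵀ * Fpᵀ).mulVec (Dw t) := sub_eq_zero.mp htz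
    rw [Matrix.mulVec_mulVec, ← h1]
  -- integration by parts
  have parts : ∫ t in Set.Ioc (0:ℝ) t₁, (Dw t ⬝ᵥ X t + P t ⬝ᵥ G t)
      = P t₁ ⬝ᵥ X t₁ - P 0 ⬝ᵥ X 0 :=
    aux_parts_vec ht0 hDwint hGint hPc hXc
  -- endpoint values
  have hend1 : P t₁ ⬝ᵥ X t₁ = ℓ ⬝ᵥ F.mulVec (x t₁) := by
    rw [hPdef, hXdef]
    simp only
    rw [hwt₁, aux_dot Fᵀ ℓ, Matrix.transpose_transpose, Matrix.mulVec_mulVec,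
      Matrix.mulVec_mulVec, hF1]
  have hend0 : P 0 ⬝ᵥ X 0 = F.mulVec (x 0) ⬝ᵥ Fpᵀ.mulVec (Fᵀ.mulVec (w 0)) := by
    rw [hPdef, hXdef]
    simp only
    rw [dotProduct_comm, aux_dot Fp (F.mulVec (x 0)) (Fᵀ.mulVec (w 0))]
  -- a.e. integrand identity
  have key : ∀ᵐ t ∂(volume.restrict (Set.Ioc (0:ℝ) t₁)),
      (w t ⬝ᵥ f t - U t ⬝ᵥ η t + b t ⬝ᵥ x t) + y t ⬝ᵥ U t
        = Dw t ⬝ᵥ X t + P t ⬝ᵥ G t := by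
    filter_upwards [hy, haeg, haeDw] with t h1 h2 h3
    have e1 : (Aᵀ.mulVec (w t)) ⬝ᵥ x t = w t ⬝ᵥ A.mulVec (x t) := by
      rw [aux_dot, Matrix.transpose_transpose]
    have e2 : (Hᵀ.mulVec (U t)) ⬝ᵥ x t = U t ⬝ᵥ H.mulVec (x t) := by
      rw [aux_dot, Matrix.transpose_transpose]
    have e3 : H.mulVec (x t) ⬝ᵥ U t = U t ⬝ᵥ H.mulVec (x t) := dotProduct_comm _ _
    have e4 : η t ⬝ᵥ U t = U t ⬝ᵥ η t := dotProduct_comm _ _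
    have e6 : w t ⬝ᵥ F.mulVec (G t) = P t ⬝ᵥ G t := by
      rw [dotProduct_comm, aux_dot F (G t) (w t), dotProduct_comm, hPdef]
    have e7 : Dw t ⬝ᵥ x t = Dw t ⬝ᵥ X t := by
      conv_lhs => rw [← h3]
      rw [aux_dot Fᵀ (Fpᵀ.mulVec (Dw t)) (x t), Matrix.transpose_transpose,
        dotProduct_comm, ← aux_dot Fp (F.mulVec (x t)) (Dw t), dotProduct_comm]
    have e8 : w t ⬝ᵥ g t = P t ⬝ᵥ G t := by
      rw [← h2, e6]
    have expand : (w t ⬝ᵥ f t - U t ⬝ᵥ η t + b t ⬝ᵥ x t) + y t ⬝ᵥ U t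
        = w t ⬝ᵥ f t + w t ⬝ᵥ A.mulVec (x t) + Dw t ⬝ᵥ x t := by
      rw [hb t, h1]
      simp only [add_dotProduct, sub_dotProduct]
      rw [e1, e2, e3, e4]
      ring
    rw [expand, e7]
    have e9 : w t ⬝ᵥ f t + w t ⬝ᵥ A.mulVec (x t) = w t ⬝ᵥ g t := by
      rw [hgdef]
      simp only
      rw [dotProduct_add]
      ring
    rw [e9, e8]
    ring
  -- final assembly
  have hadd : ∫ t in (0:ℝ)..t₁, ((w t ⬝ᵥ f t - U t ⬝ᵥ η t + b t ⬝ᵥ x t) + y t ⬝ᵥ U t)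
      = (∫ t in (0:ℝ)..t₁, (w t ⬝ᵥ f t - U t ⬝ᵥ η t + b t ⬝ᵥ x t))
        + ∫ t in (0:ℝ)..t₁, y t ⬝ᵥ U t :=
    intervalIntegral.integral_add hirhs hiyU
  have hcong : ∫ t in (0:ℝ)..t₁, ((w t ⬝ᵥ f t - U t ⬝ᵥ η t + b t ⬝ᵥ x t) + y t ⬝ᵥ U t)
      = ∫ t in Set.Ioc (0:ℝ) t₁, (Dw t ⬝ᵥ X t + P t ⬝ᵥ G t) := by
    rw [intervalIntegral.integral_of_le ht0]
    exact integral_congr_ae key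
  linarith [hadd, hcong, parts, hend1, hend0]
end

section
/- Let F ∈ ℝ^{m×n}, P = I_m − (Fᵀ)⁺Fᵀ, and let Q₀ be symmetric positive definite m×m. For any fixed vector c ∈ ℝᵐ, the minimum over d̃ ∈ ℝᵐ of ‖Q₀^{−1/2}((F⁺)ᵀFᵀc − P d̃)‖² is attained at d̂ = (PQ₀^{−1}P)⁺PQ₀^{−1}(F⁺)ᵀFᵀc, and the minimum value equals cᵀ Q̄₀ c, where Q̄₀ = F((Fᵀ)⁺ − M)ᵀ Q₀^{−1} ((Fᵀ)⁺ − M)Fᵀ with M = P(PQ₀^{−1}P)⁺PQ₀^{−1}(Fᵀ)⁺. -/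
open Matrix

private lemma posdef_vec_eq_zero {m : ℕ} {A : Matrix (Fin m) (Fin m) ℝ} (hA : A.PosDef)
    {x : Fin m → ℝ} (h : x ⬝ᵥ A *ᵥ x = 0) : x = 0 := by
  by_contra hx
  have := hA.dotProduct_mulVec_pos hx
  simp [h] at this

private lemma dp_mulVec_left {m : ℕ} (P : Matrix (Fin m) (Fin m) ℝ) (z w : Fin m → ℝ) :
    (P *ᵥ z) ⬝ᵥ w = z ⬝ᵥ Pᵀ *ᵥ w := by
  have hvm : w ᵥ* P = Pᵀ *ᵥ w := by
    simpa using vecMul_transpose Pᵀ w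
  rw [dotProduct_comm, dotProduct_mulVec, hvm, dotProduct_comm]

private lemma vecMul_eq {m : ℕ} (P : Matrix (Fin m) (Fin m) ℝ) (w : Fin m → ℝ) :
    w ᵥ* P = Pᵀ *ᵥ w := by
  simpa using vecMul_transpose Pᵀ w

/-- Key lemma: if `S = P A P` with `P` symmetric, `A` positive definite,
and `S N S = S`, then `S N P = P`. -/
private lemma key {m : ℕ} (P A N S : Matrix (Fin m) (Fin m) ℝ)
    (hS : S = P * A * P) (hPt : Pᵀ = P) (hA : A.PosDef)
    (hSNS : S * N * S = S) : S * N * P = P := by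
  -- R := S*N*P - P satisfies R*A*P = 0
  have h1 : S * N * P * A * P = S := by
    rw [Matrix.mul_assoc (S * N * P) A P, Matrix.mul_assoc (S * N) P (A * P),
      ← Matrix.mul_assoc P A P, ← hS]
    exact hSNS
  have hRAP : (S * N * P - P) * A * P = 0 := by
    rw [Matrix.sub_mul, Matrix.sub_mul, h1, hS, sub_self]
  have ht : (S * N * P - P)ᵀ = P * (Nᵀ * Sᵀ) - P := by
    simp [transpose_mul, hPt, Matrix.mul_assoc]
  have hRARt : (S * N * P - P) * A * (S * N * P - P)ᵀ = 0 := by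
    rw [ht, Matrix.mul_sub, ← Matrix.mul_assoc ((S * N * P - P) * A) P (Nᵀ * Sᵀ), hRAP,
      Matrix.zero_mul, zero_sub, neg_eq_zero]
  have hz : ∀ x, (S * N * P - P)ᵀ *ᵥ x = 0 := by
    intro x
    apply posdef_vec_eq_zero hA
    have h2 : ((S * N * P - P)ᵀ *ᵥ x) ⬝ᵥ A *ᵥ ((S * N * P - P)ᵀ *ᵥ x)
        = x ⬝ᵥ ((S * N * P - P) * A * (S * N * P - P)ᵀ) *ᵥ x := by
      rw [dp_mulVec_left, transpose_transpose, mulVec_mulVec, mulVec_mulVec,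
        Matrix.mul_assoc, Matrix.mul_assoc]
    rw [h2, hRARt]
    simp
  have hRt : (S * N * P - P)ᵀ = 0 := by
    ext i j
    have h7 := congrFun (hz (Pi.single j 1)) i
    rw [mulVec_single_one] at h7
    simp only [col_apply] at h7
    exact h7
  have hR : S * N * P - P = 0 := by
    rw [← transpose_transpose (S * N * P - P), hRt, transpose_zero]
  exact sub_eq_zero.mp hR

/-- For `P = I − (Fᵀ)⁺Fᵀ` and `Q₀` symmetric positive definite, the minimum over `d̃` of
`‖Q₀^{−1/2}((F⁺)ᵀFᵀc − P d̃)‖²` (written as the quadratic form with weight `Q₀⁻¹`) is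
attained at `d̂ = (PQ₀⁻¹P)⁺PQ₀⁻¹(F⁺)ᵀFᵀc`, with minimum value `cᵀ Q̄₀ c`, where
`Q̄₀ = F((Fᵀ)⁺ − M)ᵀ Q₀⁻¹ ((Fᵀ)⁺ − M)Fᵀ` and `M = P(PQ₀⁻¹P)⁺PQ₀⁻¹(Fᵀ)⁺`.
Here `(Fᵀ)⁺ = (F⁺)ᵀ = Fpᵀ`, and `N` denotes the pseudoinverse `(PQ₀⁻¹P)⁺`. -/
theorem min_quadratic_residual {m n : ℕ}
    (F : Matrix (Fin m) (Fin n) ℝ) (Fp : Matrix (Fin n) (Fin m) ℝ)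
    (hFp : IsMoorePenrose F Fp)
    (Q₀ : Matrix (Fin m) (Fin m) ℝ) (hQ₀ : Q₀.PosDef)
    (N : Matrix (Fin m) (Fin m) ℝ)
    (hN : IsMoorePenrose
      ((1 - Fpᵀ * Fᵀ) * Q₀⁻¹ * (1 - Fpᵀ * Fᵀ)) N)
    (c : Fin m → ℝ) :
    let P : Matrix (Fin m) (Fin m) ℝ := 1 - Fpᵀ * Fᵀ
    let a : Fin m → ℝ := (Fpᵀ * Fᵀ).mulVec c
    let dhat : Fin m → ℝ := (N * P * Q₀⁻¹).mulVec a
    let M : Matrix (Fin m) (Fin n) ℝ := P * N * P * Q₀⁻¹ * Fpᵀ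
    let Qbar : Matrix (Fin m) (Fin m) ℝ := F * (Fpᵀ - M)ᵀ * Q₀⁻¹ * (Fpᵀ - M) * Fᵀ
    (∀ d : Fin m → ℝ,
        (a - P.mulVec dhat) ⬝ᵥ Q₀⁻¹.mulVec (a - P.mulVec dhat)
          ≤ (a - P.mulVec d) ⬝ᵥ Q₀⁻¹.mulVec (a - P.mulVec d)) ∧
    (a - P.mulVec dhat) ⬝ᵥ Q₀⁻¹.mulVec (a - P.mulVec dhat) = c ⬝ᵥ Qbar.mulVec c := by
  intro P a dhat M Qbar
  obtain ⟨hf1, hf2, hf3, hf4⟩ := hFp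
  have hA : Q₀⁻¹.PosDef := hQ₀.inv
  have hAt : Q₀⁻¹ᵀ = Q₀⁻¹ := by simpa using hA.1.eq
  have hX : Fpᵀ * Fᵀ = F * Fp := by rw [← transpose_mul]; exact hf3
  have hPt : Pᵀ = P := by
    show (1 - Fpᵀ * Fᵀ)ᵀ = 1 - Fpᵀ * Fᵀ
    rw [hX, transpose_sub, transpose_one, hf3]
  -- the key identity
  have hkey : P * Q₀⁻¹ * P * N * P = P :=
    key P Q₀⁻¹ N (P * Q₀⁻¹ * P) rfl hPt hA hN.1
  -- B := (Fpᵀ - M) * Fᵀ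
  have hB : (Fpᵀ - M) * Fᵀ = Fpᵀ * Fᵀ - P * N * P * Q₀⁻¹ * (Fpᵀ * Fᵀ) := by
    show (Fpᵀ - P * N * P * Q₀⁻¹ * Fpᵀ) * Fᵀ = _
    rw [Matrix.sub_mul, Matrix.mul_assoc (P * N * P * Q₀⁻¹) Fpᵀ Fᵀ]
  have hBig : (Fpᵀ - M) * Fᵀ = Fpᵀ * Fᵀ - P * (N * P * Q₀⁻¹) * (Fpᵀ * Fᵀ) := by
    rw [hB]
    simp only [Matrix.mul_assoc]
  have hu : a - P.mulVec dhat = ((Fpᵀ - M) * Fᵀ) *ᵥ c := by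
    show (Fpᵀ * Fᵀ) *ᵥ c - P *ᵥ ((N * P * Q₀⁻¹) *ᵥ ((Fpᵀ * Fᵀ) *ᵥ c)) = _
    rw [hBig, Matrix.sub_mulVec (Fpᵀ * Fᵀ) (P * (N * P * Q₀⁻¹) * (Fpᵀ * Fᵀ)) c]
    simp only [mulVec_mulVec, Matrix.mul_assoc]
  have horth : P * Q₀⁻¹ * ((Fpᵀ - M) * Fᵀ) = 0 := by
    have h5 : P * Q₀⁻¹ * P * N * P * (Q₀⁻¹ * (Fpᵀ * Fᵀ)) = P * (Q₀⁻¹ * (Fpᵀ * Fᵀ)) := by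
      rw [hkey]
    rw [hB, Matrix.mul_sub, sub_eq_zero]
    simp only [Matrix.mul_assoc] at h5 ⊢
    exact h5.symm
  have hPAu : ∀ y : Fin m → ℝ, (P * Q₀⁻¹) *ᵥ (((Fpᵀ - M) * Fᵀ) *ᵥ y) = 0 := by
    intro y
    rw [mulVec_mulVec, horth, Matrix.zero_mulVec]
  constructor
  · intro d
    rw [hu]
    have hw : a - P.mulVec d = ((Fpᵀ - M) * Fᵀ) *ᵥ c + P *ᵥ (dhat - d) := by
      rw [← hu, Matrix.mulVec_sub]
      abel
    rw [hw]
    set u : Fin m → ℝ := ((Fpᵀ - M) * Fᵀ) *ᵥ c with hudef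
    set w : Fin m → ℝ := P *ᵥ (dhat - d) with hwdef
    have expand : (u + w) ⬝ᵥ Q₀⁻¹ *ᵥ (u + w)
        = u ⬝ᵥ Q₀⁻¹ *ᵥ u + u ⬝ᵥ Q₀⁻¹ *ᵥ w + w ⬝ᵥ Q₀⁻¹ *ᵥ u + w ⬝ᵥ Q₀⁻¹ *ᵥ w := by
      simp only [Matrix.mulVec_add, dotProduct_add, add_dotProduct]
      ring
    have cross1 : w ⬝ᵥ Q₀⁻¹ *ᵥ u = 0 := by
      rw [hwdef, dp_mulVec_left, hPt, mulVec_mulVec, hudef, hPAu, dotProduct_zero]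
    have cross2 : u ⬝ᵥ Q₀⁻¹ *ᵥ w = 0 := by
      rw [hwdef, mulVec_mulVec, dotProduct_mulVec, vecMul_eq, transpose_mul, hPt, hAt,
        hudef, hPAu, zero_dotProduct]
    have nonneg : 0 ≤ w ⬝ᵥ Q₀⁻¹ *ᵥ w := by simpa using hA.posSemidef.dotProduct_mulVec_nonneg w
    rw [expand, cross1, cross2]
    linarith
  · rw [hu]
    have hQbar : Qbar = ((Fpᵀ - M) * Fᵀ)ᵀ * (Q₀⁻¹ * ((Fpᵀ - M) * Fᵀ)) := by
      show F * (Fpᵀ - M)ᵀ * Q₀⁻¹ * (Fpᵀ - M) * Fᵀ = _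
      rw [transpose_mul, transpose_transpose]
      simp only [Matrix.mul_assoc]
    have hfin : ∀ (B : Matrix (Fin m) (Fin m) ℝ) (v : Fin m → ℝ),
        v ⬝ᵥ (Bᵀ * (Q₀⁻¹ * B)) *ᵥ v = (B *ᵥ v) ⬝ᵥ Q₀⁻¹ *ᵥ (B *ᵥ v) := by
      intro B v
      rw [← mulVec_mulVec v Bᵀ (Q₀⁻¹ * B), dotProduct_mulVec, vecMul_transpose,
        ← mulVec_mulVec v Q₀⁻¹ B]
    rw [hQbar, hfin]
end

section
/- Let F, A ∈ ℝ^{m×n}, H ∈ ℝ^{p×n}. Suppose (x, f, y, η) solves d(Fx)/dt = Ax + f, y = Hx + η on [0,∞), and (q, u) solves the dual DAE d(Fᵀq)/dt = Aᵀq − Hᵀu on [0,∞). Fix t > 0 and define g(s) = xᵀ(s) Fᵀ q(t − s) for s ∈ [0, t]. Then g is absolutely continuous and g'(s) = fᵀ(s)q(t−s) + (y(s) − η(s))ᵀ u(t−s) for almost every s ∈ [0, t]. -/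
open Matrix MeasureTheory

open Metric

private lemma dae_clm_ii {E F' : Type*} [NormedAddCommGroup E] [NormedAddCommGroup F']
    [NormedSpace ℝ E] [NormedSpace ℝ F'] {f : ℝ → E} {a b : ℝ}
    (L : E →L[ℝ] F') (hf : IntervalIntegrable f volume a b) :
    IntervalIntegrable (fun x => L (f x)) volume a b :=
  ⟨L.integrable_comp hf.1, L.integrable_comp hf.2⟩

noncomputable def dotCLM {k : ℕ} (c : Fin k → ℝ) : (Fin k → ℝ) →L[ℝ] ℝ :=
  LinearMap.toContinuousLinearMap
    { toFun := fun v => c ⬝ᵥ v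
      map_add' := fun u v => dotProduct_add c u v
      map_smul' := fun r v => by
        simp only [RingHom.id_apply, smul_eq_mul]
        rw [dotProduct_smul]
        simp [smul_eq_mul] }

@[simp] lemma dotCLM_apply {k : ℕ} (c v : Fin k → ℝ) : dotCLM c v = c ⬝ᵥ v := rfl

lemma dot_intervalIntegral {k : ℕ} (c : Fin k → ℝ) {f : ℝ → Fin k → ℝ} {a b : ℝ}
    (hf : IntervalIntegrable f volume a b) :
    (∫ x in a..b, c ⬝ᵥ f x) = c ⬝ᵥ (∫ x in a..b, f x) :=
  (dotCLM c).intervalIntegral_comp_comm hf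

lemma intervalIntegral_coord {k : ℕ} {f : ℝ → Fin k → ℝ} {a b : ℝ} (i : Fin k)
    (hf : IntervalIntegrable f volume a b) :
    (∫ x in a..b, f x) i = ∫ x in a..b, f x i :=
  ((ContinuousLinearMap.proj (R := ℝ) (φ := fun _ : Fin k => ℝ) i).intervalIntegral_comp_comm
    hf).symm

lemma intervalIntegrable_coord {k : ℕ} {f : ℝ → Fin k → ℝ} {a b : ℝ} (i : Fin k)
    (hf : IntervalIntegrable f volume a b) :
    IntervalIntegrable (fun x => f x i) volume a b :=
  dae_clm_ii (ContinuousLinearMap.proj (R := ℝ) (φ := fun _ : Fin k => ℝ) i) hf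

lemma dae_dot_ii_right {k : ℕ} {f g : ℝ → Fin k → ℝ} {a b : ℝ}
    (hf : IntervalIntegrable f volume a b) (hg : ContinuousOn g (Set.uIcc a b)) :
    IntervalIntegrable (fun τ => f τ ⬝ᵥ g τ) volume a b := by
  have : (fun τ => f τ ⬝ᵥ g τ) = fun τ => ∑ i, f τ i * g τ i := by
    funext τ; rfl
  rw [this]
  have h := IntervalIntegrable.sum (μ := volume) (a := a) (b := b) Finset.univ
    (f := fun i (τ : ℝ) => f τ i * g τ i) (fun i _ =>
      (intervalIntegrable_coord i hf).mul_continuousOn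
        (((continuous_apply i).comp_continuousOn hg)))
  have e : (∑ i : Fin k, fun (τ : ℝ) => f τ i * g τ i) = fun τ => ∑ i, f τ i * g τ i := by
    funext τ; simp
  rwa [e] at h

lemma dae_dot_ii_left {k : ℕ} {f g : ℝ → Fin k → ℝ} {a b : ℝ}
    (hf : ContinuousOn f (Set.uIcc a b)) (hg : IntervalIntegrable g volume a b) :
    IntervalIntegrable (fun τ => f τ ⬝ᵥ g τ) volume a b := by
  have : (fun τ => f τ ⬝ᵥ g τ) = fun τ => ∑ i, f τ i * g τ i := by
    funext τ; rfl
  rw [this]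
  have h := IntervalIntegrable.sum (μ := volume) (a := a) (b := b) Finset.univ
    (f := fun i (τ : ℝ) => f τ i * g τ i) (fun i _ =>
      (intervalIntegrable_coord i hg).continuousOn_mul
        (((continuous_apply i).comp_continuousOn hf)))
  have e : (∑ i : Fin k, fun (τ : ℝ) => f τ i * g τ i) = fun τ => ∑ i, f τ i * g τ i := by
    funext τ; simp
  rwa [e] at h

private lemma scalarSP {s : ℝ} (hs : 0 ≤ s) (φ ψ : ℝ → ℝ)
    (hφ : IntervalIntegrable φ volume 0 s) (hψ : IntervalIntegrable ψ volume 0 s) :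
    (∫ τ in (0:ℝ)..s, ((φ τ * ∫ ρ in (0:ℝ)..τ, ψ ρ) + (∫ ρ in (0:ℝ)..τ, φ ρ) * ψ τ))
      = (∫ τ in (0:ℝ)..s, φ τ) * ∫ τ in (0:ℝ)..s, ψ τ := by
  set μ := volume.restrict (Set.Ioc (0:ℝ) s) with hμdef
  have hφμ : Integrable φ μ := hφ.1
  have hψμ : Integrable ψ μ := hψ.1
  set F : ℝ × ℝ → ℝ := fun z => φ z.1 * ψ z.2 with hFdef
  have hF : Integrable F (μ.prod μ) := hφμ.mul_prod hψμ
  have hSm : MeasurableSet {z : ℝ × ℝ | z.2 ≤ z.1} :=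
    measurableSet_le measurable_snd measurable_fst
  set G1 : ℝ × ℝ → ℝ := {z : ℝ × ℝ | z.2 ≤ z.1}.indicator F with hG1def
  set G2 : ℝ × ℝ → ℝ := ({z : ℝ × ℝ | z.2 ≤ z.1}ᶜ).indicator F with hG2def
  have hG1 : Integrable G1 (μ.prod μ) := hF.indicator hSm
  have hG2 : Integrable G2 (μ.prod μ) := hF.indicator hSm.compl
  have key1 : ∀ τ ∈ Set.Ioc (0:ℝ) s, (∫ ρ, G1 (τ, ρ) ∂μ) = φ τ * ∫ ρ in (0:ℝ)..τ, ψ ρ := by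
    intro τ hτ
    have e1 : (fun ρ => G1 (τ, ρ)) = fun ρ => φ τ * (Set.Iic τ).indicator ψ ρ := by
      funext ρ
      by_cases h : ρ ≤ τ <;>
        simp [hG1def, hFdef, Set.indicator_apply, h]
    rw [e1, integral_const_mul]
    congr 1
    rw [integral_indicator measurableSet_Iic, hμdef,
      Measure.restrict_restrict measurableSet_Iic]
    have e2 : Set.Iic τ ∩ Set.Ioc 0 s = Set.Ioc 0 τ := by
      ext ρ; simp only [Set.mem_inter_iff, Set.mem_Iic, Set.mem_Ioc]
      exact ⟨fun ⟨h1, h2, _⟩ => ⟨h2, h1⟩, fun ⟨h1, h2⟩ => ⟨h2, h1, h2.trans hτ.2⟩⟩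
    rw [e2, intervalIntegral.integral_of_le hτ.1.le]
  have key2 : ∀ τ ∈ Set.Ioc (0:ℝ) s, (∫ ρ, G2 (ρ, τ) ∂μ) = (∫ ρ in (0:ℝ)..τ, φ ρ) * ψ τ := by
    intro τ hτ
    have e1 : (fun ρ => G2 (ρ, τ)) = fun ρ => (Set.Iio τ).indicator φ ρ * ψ τ := by
      funext ρ
      by_cases h : ρ < τ <;>
        simp [hG2def, hFdef, Set.indicator_apply, h, not_le.mpr, not_lt.mp]
    rw [e1, integral_mul_const]
    congr 1
    rw [integral_indicator measurableSet_Iio, hμdef,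
      Measure.restrict_restrict measurableSet_Iio]
    have e2 : Set.Iio τ ∩ Set.Ioc 0 s = Set.Ioo 0 τ := by
      ext ρ; simp only [Set.mem_inter_iff, Set.mem_Iio, Set.mem_Ioc, Set.mem_Ioo]
      exact ⟨fun ⟨h1, h2, _⟩ => ⟨h2, h1⟩,
        fun ⟨h1, h2⟩ => ⟨h2, h1, (h2.le.trans hτ.2)⟩⟩
    rw [e2, ← integral_Ioc_eq_integral_Ioo, intervalIntegral.integral_of_le hτ.1.le]
  have i1 : Integrable (fun τ => φ τ * ∫ ρ in (0:ℝ)..τ, ψ ρ) μ := by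
    refine (hG1.integral_prod_left).congr ?_
    filter_upwards [ae_restrict_mem measurableSet_Ioc] with τ hτ using key1 τ hτ
  have i2 : Integrable (fun τ => (∫ ρ in (0:ℝ)..τ, φ ρ) * ψ τ) μ := by
    refine (hG2.integral_prod_right).congr ?_
    filter_upwards [ae_restrict_mem measurableSet_Ioc] with τ hτ using key2 τ hτ
  have E1 : (∫ τ, (φ τ * ∫ ρ in (0:ℝ)..τ, ψ ρ) ∂μ) = ∫ z, G1 z ∂(μ.prod μ) := by
    rw [integral_prod _ hG1]
    refine integral_congr_ae ?_
    filter_upwards [ae_restrict_mem measurableSet_Ioc] with τ hτ using (key1 τ hτ).symm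
  have E2 : (∫ τ, ((∫ ρ in (0:ℝ)..τ, φ ρ) * ψ τ) ∂μ) = ∫ z, G2 z ∂(μ.prod μ) := by
    have hswap : Integrable (Function.uncurry fun ρ τ => G2 (ρ, τ)) (μ.prod μ) := hG2
    have swap := integral_integral_swap hswap
    rw [integral_prod _ hG2, swap]
    refine integral_congr_ae ?_
    filter_upwards [ae_restrict_mem measurableSet_Ioc] with τ hτ using (key2 τ hτ).symm
  have sum_eq : (∫ z, G1 z ∂(μ.prod μ)) + (∫ z, G2 z ∂(μ.prod μ)) = ∫ z, F z ∂(μ.prod μ) := by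
    rw [← integral_add hG1 hG2]
    refine integral_congr_ae (Filter.Eventually.of_forall fun z => ?_)
    by_cases h : z ∈ {z : ℝ × ℝ | z.2 ≤ z.1} <;>
      simp [hG1def, hG2def, Set.indicator_apply, h]
  have prodF : (∫ z, F z ∂(μ.prod μ)) = (∫ τ, φ τ ∂μ) * ∫ τ, ψ τ ∂μ :=
    integral_prod_mul φ ψ
  rw [intervalIntegral.integral_of_le hs, intervalIntegral.integral_of_le hs,
    intervalIntegral.integral_of_le hs]
  rw [show (volume.restrict (Set.Ioc (0:ℝ) s)) = μ from rfl]
  rw [integral_add i1 i2, E1, E2, sum_eq, prodF]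

private lemma vecSP {k : ℕ} {s : ℝ} (hs : 0 ≤ s) (a e : ℝ → Fin k → ℝ)
    (ha : IntervalIntegrable a volume 0 s) (he : IntervalIntegrable e volume 0 s) :
    (∫ τ in (0:ℝ)..s, (a τ ⬝ᵥ (∫ ρ in (0:ℝ)..τ, e ρ) + (∫ ρ in (0:ℝ)..τ, a ρ) ⬝ᵥ e τ))
      = (∫ τ in (0:ℝ)..s, a τ) ⬝ᵥ (∫ τ in (0:ℝ)..s, e τ) := by
  have hsub : ∀ τ ∈ Set.uIcc (0:ℝ) s, Set.uIcc (0:ℝ) τ ⊆ Set.uIcc (0:ℝ) s := by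
    intro τ hτ
    rw [Set.uIcc_of_le hs] at hτ ⊢
    rw [Set.uIcc_of_le hτ.1]
    exact Set.Icc_subset_Icc le_rfl hτ.2
  have ha' : ∀ τ ∈ Set.uIcc (0:ℝ) s, IntervalIntegrable a volume 0 τ := by
    intro τ hτ
    refine ha.mono_set ?_
    rw [Set.uIcc_of_le hs] at hτ ⊢
    rw [Set.uIcc_of_le hτ.1]; exact Set.Icc_subset_Icc le_rfl hτ.2
  have he' : ∀ τ ∈ Set.uIcc (0:ℝ) s, IntervalIntegrable e volume 0 τ := by
    intro τ hτ
    refine he.mono_set ?_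
    rw [Set.uIcc_of_le hs] at hτ ⊢
    rw [Set.uIcc_of_le hτ.1]; exact Set.Icc_subset_Icc le_rfl hτ.2
  -- rewrite integrand as finite sum of scalar products
  have step1 : (∫ τ in (0:ℝ)..s, (a τ ⬝ᵥ (∫ ρ in (0:ℝ)..τ, e ρ) + (∫ ρ in (0:ℝ)..τ, a ρ) ⬝ᵥ e τ))
      = ∫ τ in (0:ℝ)..s, ∑ i,
          ((a τ i) * (∫ ρ in (0:ℝ)..τ, e ρ i) + (∫ ρ in (0:ℝ)..τ, a ρ i) * (e τ i)) := by
    refine intervalIntegral.integral_congr (fun τ hτ => ?_)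
    have h1 : (∫ ρ in (0:ℝ)..τ, e ρ) = fun i => ∫ ρ in (0:ℝ)..τ, e ρ i := by
      funext i; exact intervalIntegral_coord i (he' τ hτ)
    have h2 : (∫ ρ in (0:ℝ)..τ, a ρ) = fun i => ∫ ρ in (0:ℝ)..τ, a ρ i := by
      funext i; exact intervalIntegral_coord i (ha' τ hτ)
    rw [h1, h2]
    simp [dotProduct, Finset.sum_add_distrib]
  have hcontE : ∀ i : Fin k, ContinuousOn (fun τ => ∫ ρ in (0:ℝ)..τ, e ρ i) (Set.uIcc 0 s) := by
    intro i
    have : IntegrableOn (fun ρ => e ρ i) (Set.uIcc 0 s) volume := by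
      rw [Set.uIcc_of_le hs]
      exact (intervalIntegrable_iff_integrableOn_Icc_of_le hs).mp (intervalIntegrable_coord i he)
    exact intervalIntegral.continuousOn_primitive_interval this
  have hcontA : ∀ i : Fin k, ContinuousOn (fun τ => ∫ ρ in (0:ℝ)..τ, a ρ i) (Set.uIcc 0 s) := by
    intro i
    have : IntegrableOn (fun ρ => a ρ i) (Set.uIcc 0 s) volume := by
      rw [Set.uIcc_of_le hs]
      exact (intervalIntegrable_iff_integrableOn_Icc_of_le hs).mp (intervalIntegrable_coord i ha)
    exact intervalIntegral.continuousOn_primitive_interval this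
  have hii : ∀ i : Fin k, IntervalIntegrable
      (fun τ => (a τ i) * (∫ ρ in (0:ℝ)..τ, e ρ i) + (∫ ρ in (0:ℝ)..τ, a ρ i) * (e τ i))
      volume 0 s := by
    intro i
    exact ((intervalIntegrable_coord i ha).mul_continuousOn (hcontE i)).add
      ((intervalIntegrable_coord i he).continuousOn_mul (hcontA i))
  rw [step1, intervalIntegral.integral_finset_sum (fun i _ => hii i)]
  have step2 : ∀ i : Fin k,
      (∫ τ in (0:ℝ)..s, ((a τ i) * (∫ ρ in (0:ℝ)..τ, e ρ i) + (∫ ρ in (0:ℝ)..τ, a ρ i) * (e τ i)))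
        = (∫ τ in (0:ℝ)..s, a τ i) * ∫ τ in (0:ℝ)..s, e τ i := fun i =>
    scalarSP hs _ _ (intervalIntegrable_coord i ha) (intervalIntegrable_coord i he)
  rw [Finset.sum_congr rfl (fun i _ => step2 i)]
  simp [dotProduct, intervalIntegral_coord _ ha, intervalIntegral_coord _ he]

private lemma ae_mem_of_integral_mem {k : ℕ} (V : Submodule ℝ (Fin k → ℝ)) {h : ℝ → Fin k → ℝ}
    {T : ℝ} (hT : 0 ≤ T) (hint : IntervalIntegrable h volume 0 T)
    (hmem : ∀ s ∈ Set.Icc (0:ℝ) T, (∫ ρ in (0:ℝ)..s, h ρ) ∈ V) :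
    ∀ᵐ τ ∂(volume.restrict (Set.Ioc (0:ℝ) T)), h τ ∈ V := by
  obtain ⟨V', hc⟩ := Submodule.exists_isCompl V
  set pr := V.linearProjOfIsCompl V' hc with hprdef
  set π : (Fin k → ℝ) →ₗ[ℝ] (Fin k → ℝ) := LinearMap.id - V.subtype.comp pr with hπdef
  have hπ0 : ∀ v ∈ V, π v = 0 := by
    intro v hv
    have h1 : pr v = ⟨v, hv⟩ := Submodule.linearProjOfIsCompl_apply_left hc ⟨v, hv⟩
    simp [hπdef, h1]
  have hπmem : ∀ v, π v = 0 → v ∈ V := by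
    intro v hv
    have h1 : v - (pr v : Fin k → ℝ) = 0 := hv
    have h2 : v = (pr v : Fin k → ℝ) := by
      rwa [sub_eq_zero] at h1
    rw [h2]; exact (pr v).2
  set πc : (Fin k → ℝ) →L[ℝ] (Fin k → ℝ) := LinearMap.toContinuousLinearMap π with hπcdef
  have hπc : ∀ v, πc v = π v := fun v => rfl
  set w : ℝ → Fin k → ℝ := (Set.Ioc (0:ℝ) T).indicator (fun τ => πc (h τ)) with hwdef
  have hw_int : Integrable w volume :=
    IntegrableOn.integrable_indicator
      (πc.integrable_comp (hint.1 : IntegrableOn _ _ _)) measurableSet_Ioc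
  have hZ : ∀ u v : ℝ, (∫ ρ in Set.Ioc u v, w ρ) = 0 := by
    intro u v
    rw [hwdef, setIntegral_indicator measurableSet_Ioc, Set.Ioc_inter_Ioc]
    set u' := u ⊔ 0 with hu'
    set v' := v ⊓ T with hv'
    by_cases hcase : u' ≤ v'
    · have h0u' : 0 ≤ u' := le_max_right _ _
      have h0v' : 0 ≤ v' := h0u'.trans hcase
      have hv'T : v' ≤ T := min_le_right _ _
      have hu'T : u' ≤ T := hcase.trans hv'T
      have hiv : IntervalIntegrable h volume 0 v' := hint.mono_set
        (by rw [Set.uIcc_of_le h0v', Set.uIcc_of_le hT]; exact Set.Icc_subset_Icc le_rfl hv'T)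
      have hiu : IntervalIntegrable h volume 0 u' := hint.mono_set
        (by rw [Set.uIcc_of_le h0u', Set.uIcc_of_le hT]; exact Set.Icc_subset_Icc le_rfl hu'T)
      have hiuv : IntervalIntegrable h volume u' v' := hiv.mono_set
        (by rw [Set.uIcc_of_le hcase, Set.uIcc_of_le h0v']; exact Set.Icc_subset_Icc h0u' le_rfl)
      rw [← intervalIntegral.integral_of_le hcase,
        (πc.intervalIntegral_comp_comm hiuv : _ = _)]
      have key : (∫ ρ in u'..v', h ρ) = (∫ ρ in (0:ℝ)..v', h ρ) - ∫ ρ in (0:ℝ)..u', h ρ :=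
        (intervalIntegral.integral_interval_sub_left hiv hiu).symm
      rw [key, map_sub, hπc, hπc, hπ0 _ (hmem v' ⟨h0v', hv'T⟩), hπ0 _ (hmem u' ⟨h0u', hu'T⟩),
        sub_zero]
    · rw [Set.Ioc_eq_empty (fun hlt => hcase hlt.le), setIntegral_empty]
  have hae0 : ∀ᵐ τ ∂(volume : Measure ℝ), w τ = 0 := by
    filter_upwards [IsUnifLocDoublingMeasure.ae_tendsto_average (μ := (volume : Measure ℝ))
      hw_int.locallyIntegrable 1] with τ hτ
    have hev : ∀ᶠ j in nhdsWithin (0:ℝ) (Set.Ioi 0), τ ∈ closedBall τ (1 * j) := by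
      filter_upwards [self_mem_nhdsWithin] with j hj
      have : (0:ℝ) ≤ j := le_of_lt hj
      exact Metric.mem_closedBall_self (by simp [this])
    have htend := hτ (fun _ : ℝ => τ) id Filter.tendsto_id hev
    have havg : ∀ j : ℝ, (⨍ y in closedBall τ j, w y ∂volume) = 0 := by
      intro j
      rw [setAverage_eq, Real.closedBall_eq_Icc, integral_Icc_eq_integral_Ioc, hZ, smul_zero]
    have htend0 : Filter.Tendsto (fun j : ℝ => ⨍ y in closedBall τ j, w y ∂volume)
        (nhdsWithin (0:ℝ) (Set.Ioi 0)) (nhds 0) := by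
      simpa [havg] using (tendsto_const_nhds :
        Filter.Tendsto (fun _ : ℝ => (0 : Fin k → ℝ)) (nhdsWithin (0:ℝ) (Set.Ioi 0)) (nhds 0))
    exact tendsto_nhds_unique htend htend0
  filter_upwards [ae_restrict_mem measurableSet_Ioc, ae_restrict_of_ae hae0] with τ h1 h2
  have : πc (h τ) = 0 := by
    rw [hwdef] at h2
    rwa [Set.indicator_of_mem h1] at h2
  exact hπmem _ ((hπc (h τ)) ▸ this)

lemma dae_dot_shift {k l : ℕ} (M : Matrix (Fin k) (Fin l) ℝ) (c : Fin l → ℝ) (z : Fin k → ℝ) :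
    (M.mulVec c) ⬝ᵥ z = c ⬝ᵥ (Mᵀ.mulVec z) := by
  rw [dotProduct_mulVec, Matrix.vecMul_transpose]

lemma mulVec_intervalIntegral {k l : ℕ} (M : Matrix (Fin k) (Fin l) ℝ) {f : ℝ → Fin l → ℝ}
    {a b : ℝ} (hf : IntervalIntegrable f volume a b) :
    M.mulVec (∫ x in a..b, f x) = ∫ x in a..b, M.mulVec (f x) := by
  have h := (LinearMap.toContinuousLinearMap M.mulVecLin).intervalIntegral_comp_comm hf
  simpa using h.symm

/-- If `(x,f,y,η)` solves `d(Fx)/dt = Ax + f`, `y = Hx + η` on `[0,∞)` and `(q,u)` solves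
the dual DAE `d(Fᵀq)/dt = Aᵀq − Hᵀu` on `[0,∞)`, then for fixed `t > 0` the function
`g(s) = xᵀ(s)Fᵀq(t−s)` is absolutely continuous on `[0,t]` with
`g'(s) = fᵀ(s)q(t−s) + (y(s) − η(s))ᵀu(t−s)` a.e.; equivalently
`g(s) = g(0) + ∫₀ˢ (fᵀ(τ)q(t−τ) + (y(τ)−η(τ))ᵀu(t−τ)) dτ` for all `s ∈ [0,t]`. -/
theorem duality_pairing_derivative {m n p : ℕ}
    (F A : Matrix (Fin m) (Fin n) ℝ) (H : Matrix (Fin p) (Fin n) ℝ)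
    (t : ℝ) (ht : 0 < t)
    (x : ℝ → Fin n → ℝ) (f : ℝ → Fin m → ℝ) (y η : ℝ → Fin p → ℝ)
    (q : ℝ → Fin m → ℝ) (u : ℝ → Fin p → ℝ)
    -- (x,f,y,η) solves the primal DAE on [0,∞):
    (hxint : ∀ T > (0:ℝ), IntervalIntegrable (fun s => A.mulVec (x s) + f s) volume 0 T)
    (hx : ∀ τ ∈ Set.Ici (0:ℝ),
      F.mulVec (x τ) = F.mulVec (x 0) + ∫ s in (0:ℝ)..τ, (A.mulVec (x s) + f s))
    (hy : ∀ᵐ τ ∂(volume.restrict (Set.Ici (0:ℝ))), y τ = H.mulVec (x τ) + η τ)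
    -- (q,u) solves the dual DAE on [0,∞):
    (hqint : ∀ T > (0:ℝ), IntervalIntegrable
      (fun s => Aᵀ.mulVec (q s) - Hᵀ.mulVec (u s)) volume 0 T)
    (hq : ∀ τ ∈ Set.Ici (0:ℝ),
      Fᵀ.mulVec (q τ) = Fᵀ.mulVec (q 0)
        + ∫ s in (0:ℝ)..τ, (Aᵀ.mulVec (q s) - Hᵀ.mulVec (u s)))
    -- integrability of the derivative expression:
    (hdint : IntervalIntegrable
      (fun τ => f τ ⬝ᵥ q (t - τ) + (y τ - η τ) ⬝ᵥ u (t - τ)) volume 0 t) :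
    ∀ s ∈ Set.Icc (0:ℝ) t,
      x s ⬝ᵥ Fᵀ.mulVec (q (t - s))
        = x 0 ⬝ᵥ Fᵀ.mulVec (q t)
          + ∫ τ in (0:ℝ)..s, (f τ ⬝ᵥ q (t - τ) + (y τ - η τ) ⬝ᵥ u (t - τ)) := by
  intro s hs
  have hs0 : 0 ≤ s := hs.1
  have hst : s ≤ t := hs.2
  have hts0 : 0 ≤ t - s := by linarith
  set a : ℝ → Fin m → ℝ := fun τ => A.mulVec (x τ) + f τ with hadef
  set b : ℝ → Fin n → ℝ := fun σ => Aᵀ.mulVec (q σ) - Hᵀ.mulVec (u σ) with hbdef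
  have ha : IntervalIntegrable a volume 0 t := hxint t ht
  have hb : IntervalIntegrable b volume 0 t := hqint t ht
  have hsubIcc : Set.uIcc (0:ℝ) s ⊆ Set.uIcc (0:ℝ) t := by
    rw [Set.uIcc_of_le hs0, Set.uIcc_of_le ht.le]
    exact Set.Icc_subset_Icc le_rfl hst
  have haS : IntervalIntegrable a volume 0 s := ha.mono_set hsubIcc
  -- range facts
  have haV : ∀ᵐ τ ∂(volume.restrict (Set.Ioc (0:ℝ) t)),
      a τ ∈ LinearMap.range F.mulVecLin := by
    apply ae_mem_of_integral_mem _ ht.le ha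
    intro σ hσ
    have h1 := hx σ (Set.mem_Ici.mpr hσ.1)
    have e : (∫ ρ in (0:ℝ)..σ, a ρ) = F.mulVec (x σ) - F.mulVec (x 0) := by
      rw [h1]; abel
    rw [e]
    exact sub_mem ⟨x σ, rfl⟩ ⟨x 0, rfl⟩
  have hbW : ∀ᵐ σ ∂(volume.restrict (Set.Ioc (0:ℝ) t)),
      b σ ∈ LinearMap.range Fᵀ.mulVecLin := by
    apply ae_mem_of_integral_mem _ ht.le hb
    intro σ hσ
    have h1 := hq σ (Set.mem_Ici.mpr hσ.1)
    have e : (∫ ρ in (0:ℝ)..σ, b ρ) = Fᵀ.mulVec (q σ) - Fᵀ.mulVec (q 0) := by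
      rw [h1]; abel
    rw [e]
    exact sub_mem ⟨q σ, rfl⟩ ⟨q 0, rfl⟩
  -- a linear section of Fᵀ on its range
  obtain ⟨W', hWc⟩ := Submodule.exists_isCompl (LinearMap.range Fᵀ.mulVecLin)
  set prW := (LinearMap.range Fᵀ.mulVecLin).linearProjOfIsCompl W' hWc with hprWdef
  obtain ⟨sec, hsec⟩ := (Fᵀ.mulVecLin.rangeRestrict).exists_rightInverse_of_surjective
    (LinearMap.range_eq_top.mpr Fᵀ.mulVecLin.surjective_rangeRestrict)
  have hsec' : ∀ w' : LinearMap.range Fᵀ.mulVecLin,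
      Fᵀ.mulVec (sec w') = (w' : Fin n → ℝ) := by
    intro w'
    have h1 : Fᵀ.mulVecLin.rangeRestrict (sec w') = w' := DFunLike.congr_fun hsec w'
    have h2 := congrArg Subtype.val h1
    simpa [Matrix.mulVec_transpose] using h2
  set Lc : (Fin n → ℝ) →L[ℝ] (Fin m → ℝ) :=
    LinearMap.toContinuousLinearMap (sec.comp prW) with hLcdef
  have hLc : ∀ v ∈ LinearMap.range Fᵀ.mulVecLin, Fᵀ.mulVec (Lc v) = v := by
    intro v hv
    have h1 : prW v = ⟨v, hv⟩ := Submodule.linearProjOfIsCompl_apply_left hWc ⟨v, hv⟩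
    show Fᵀ.mulVec (sec (prW v)) = v
    rw [h1, hsec' ⟨v, hv⟩]
  set d : ℝ → Fin m → ℝ := (Set.Ioc (0:ℝ) t).indicator (fun σ => Lc (b σ)) with hddef
  have hd_int : Integrable d volume :=
    IntegrableOn.integrable_indicator
      (Lc.integrable_comp (hb.1 : IntegrableOn _ _ _)) measurableSet_Ioc
  have hd_ii : ∀ a' b' : ℝ, IntervalIntegrable d volume a' b' := fun a' b' =>
    hd_int.intervalIntegrable
  have hdb : ∀ᵐ σ ∂(volume : Measure ℝ), σ ∈ Set.Ioc (0:ℝ) t → Fᵀ.mulVec (d σ) = b σ := by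
    rw [← ae_restrict_iff' measurableSet_Ioc]
    filter_upwards [ae_restrict_mem measurableSet_Ioc, hbW] with σ h1 h2
    rw [hddef, Set.indicator_of_mem h1]
    exact hLc _ h2
  -- the modified dual trajectory
  set D : ℝ → Fin m → ℝ := fun σ => ∫ ρ in (0:ℝ)..σ, d ρ with hDdef
  have hDcont : Continuous D := intervalIntegral.continuous_primitive hd_ii 0
  set qt' : ℝ → Fin m → ℝ := fun σ => q 0 + D σ with hqtdef
  have key1 : ∀ σ ∈ Set.Icc (0:ℝ) t, Fᵀ.mulVec (qt' σ) = Fᵀ.mulVec (q σ) := by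
    intro σ hσ
    have h1 : Fᵀ.mulVec (qt' σ) = Fᵀ.mulVec (q 0) + Fᵀ.mulVec (D σ) := by
      rw [hqtdef]; exact Matrix.mulVec_add _ _ _
    have h2 : Fᵀ.mulVec (D σ) = ∫ ρ in (0:ℝ)..σ, Fᵀ.mulVec (d ρ) :=
      mulVec_intervalIntegral _ (hd_ii 0 σ)
    have h3 : (∫ ρ in (0:ℝ)..σ, Fᵀ.mulVec (d ρ)) = ∫ ρ in (0:ℝ)..σ, b ρ := by
      apply intervalIntegral.integral_congr_ae
      filter_upwards [hdb] with ρ hρ hρ2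
      rw [Set.uIoc_of_le hσ.1] at hρ2
      exact hρ ⟨hρ2.1, hρ2.2.trans hσ.2⟩
    rw [h1, h2, h3, ← hq σ (Set.mem_Ici.mpr hσ.1)]
  -- P and its representation
  set P : ℝ → Fin m → ℝ := fun τ => F.mulVec (x τ) with hPdef
  have hP : ∀ τ ∈ Set.Icc (0:ℝ) t, P τ = P 0 + ∫ ρ in (0:ℝ)..τ, a ρ := fun τ hτ =>
    hx τ (Set.mem_Ici.mpr hτ.1)
  -- the reflected integrand
  have hmp : MeasurePreserving (fun τ : ℝ => t - τ) volume volume :=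
    Measure.measurePreserving_sub_left volume t
  have hdt_int : Integrable (fun τ => d (t - τ)) volume := by
    have := (hmp.integrable_comp hd_int.aestronglyMeasurable).mpr hd_int
    exact this
  have hdt_ii : ∀ a' b' : ℝ, IntervalIntegrable (fun τ => d (t - τ)) volume a' b' :=
    fun a' b' => hdt_int.intervalIntegrable
  -- Step A : rewrite the goal integrand
  have hyae : ∀ᵐ τ ∂(volume : Measure ℝ), τ ∈ Set.Ici (0:ℝ) → y τ = H.mulVec (x τ) + η τ :=
    (ae_restrict_iff' measurableSet_Ici).mp hy
  have haV' : ∀ᵐ τ ∂(volume : Measure ℝ), τ ∈ Set.Ioc (0:ℝ) t →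
      a τ ∈ LinearMap.range F.mulVecLin :=
    (ae_restrict_iff' measurableSet_Ioc).mp haV
  have hdb'' : ∀ᵐ τ ∂(volume : Measure ℝ),
      (t - τ) ∈ Set.Ioc (0:ℝ) t → Fᵀ.mulVec (d (t - τ)) = b (t - τ) :=
    hmp.quasiMeasurePreserving.ae hdb
  have hne : ∀ᵐ τ : ℝ ∂volume, τ ≠ t := by
    rw [ae_iff]
    have : {τ : ℝ | ¬τ ≠ t} = {t} := by ext τ; simp
    rw [this]
    exact measure_singleton t
  have stepA : (∫ τ in (0:ℝ)..s, (f τ ⬝ᵥ q (t - τ) + (y τ - η τ) ⬝ᵥ u (t - τ)))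
      = ∫ τ in (0:ℝ)..s, (a τ ⬝ᵥ qt' (t - τ) - P τ ⬝ᵥ d (t - τ)) := by
    apply intervalIntegral.integral_congr_ae
    filter_upwards [hyae, haV', hdb'', hne] with τ h1 h2 h3 h4 hmem
    rw [Set.uIoc_of_le hs0] at hmem
    obtain ⟨hτ0, hτs⟩ := hmem
    have hτt : τ ≤ t := hτs.trans hst
    have hτlt : τ < t := lt_of_le_of_ne hτt h4
    have h1' : y τ - η τ = H.mulVec (x τ) := by
      rw [h1 (le_of_lt hτ0)]; abel
    have e1 : a τ ⬝ᵥ qt' (t - τ) = a τ ⬝ᵥ q (t - τ) := by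
      obtain ⟨c, hc⟩ := h2 ⟨hτ0, hτt⟩
      have hc' : F.mulVec c = a τ := hc
      rw [← hc', dae_dot_shift, dae_dot_shift,
        key1 (t - τ) ⟨by linarith, by linarith⟩]
    have e2 : P τ ⬝ᵥ d (t - τ) = x τ ⬝ᵥ b (t - τ) := by
      have : P τ ⬝ᵥ d (t - τ) = x τ ⬝ᵥ Fᵀ.mulVec (d (t - τ)) := dae_dot_shift F _ _
      rw [this, h3 ⟨by linarith, by linarith⟩]
    rw [e1, e2, h1', hadef, hbdef]
    simp only [add_dotProduct, dotProduct_sub, dae_dot_shift A, dae_dot_shift H]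
    ring
  -- Step B : rewrite both boundary pairings through qt'
  have hB1 : x s ⬝ᵥ Fᵀ.mulVec (q (t - s)) = P s ⬝ᵥ qt' (t - s) := by
    rw [← key1 (t - s) ⟨by linarith, by linarith⟩, ← dae_dot_shift F]
  have hB2 : x 0 ⬝ᵥ Fᵀ.mulVec (q t) = P 0 ⬝ᵥ qt' t := by
    rw [← key1 t ⟨le_of_lt ht, le_rfl⟩, ← dae_dot_shift F]
  rw [hB1, hB2, stepA]
  -- Step C : replace P τ by its primitive representation inside the integral
  have stepC : (∫ τ in (0:ℝ)..s, (a τ ⬝ᵥ qt' (t - τ) - P τ ⬝ᵥ d (t - τ)))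
      = ∫ τ in (0:ℝ)..s,
          (a τ ⬝ᵥ qt' (t - τ) - (P 0 + ∫ ρ in (0:ℝ)..τ, a ρ) ⬝ᵥ d (t - τ)) := by
    refine intervalIntegral.integral_congr fun τ hτ => ?_
    rw [Set.uIcc_of_le hs0] at hτ
    rw [hP τ ⟨hτ.1, hτ.2.trans hst⟩]
  rw [stepC]
  -- continuity facts
  have hDtr : Continuous fun τ : ℝ => D (t - τ) :=
    hDcont.comp (continuous_const.sub continuous_id)
  have hAAcont : ContinuousOn (fun τ => ∫ ρ in (0:ℝ)..τ, a ρ) (Set.uIcc 0 s) := by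
    apply intervalIntegral.continuousOn_primitive_interval
    rw [Set.uIcc_of_le hs0]
    exact (intervalIntegrable_iff_integrableOn_Icc_of_le hs0).mp haS
  have hEcont : Continuous fun τ : ℝ => ∫ ρ in (0:ℝ)..τ, d (t - ρ) :=
    intervalIntegral.continuous_primitive hdt_ii 0
  -- integrabilities on 0..s
  have j1 : IntervalIntegrable (fun τ => a τ ⬝ᵥ q 0) volume 0 s :=
    dae_dot_ii_right haS continuousOn_const
  have j2 : IntervalIntegrable (fun τ => a τ ⬝ᵥ D (t - τ)) volume 0 s :=
    dae_dot_ii_right haS hDtr.continuousOn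
  have j3 : IntervalIntegrable (fun τ => P 0 ⬝ᵥ d (t - τ)) volume 0 s :=
    dae_dot_ii_left continuousOn_const (hdt_ii 0 s)
  have j4 : IntervalIntegrable (fun τ => (∫ ρ in (0:ℝ)..τ, a ρ) ⬝ᵥ d (t - τ)) volume 0 s :=
    dae_dot_ii_left hAAcont (hdt_ii 0 s)
  have j5 : IntervalIntegrable (fun τ => a τ ⬝ᵥ ∫ ρ in (0:ℝ)..τ, d (t - ρ)) volume 0 s :=
    dae_dot_ii_right haS hEcont.continuousOn
  have jDts : IntervalIntegrable (fun τ => a τ ⬝ᵥ D (t - s)) volume 0 s :=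
    dae_dot_ii_right haS continuousOn_const
  have jEs : IntervalIntegrable (fun τ => a τ ⬝ᵥ (∫ ρ in (0:ℝ)..s, d (t - ρ))) volume 0 s :=
    dae_dot_ii_right haS continuousOn_const
  -- split of D (t - τ)
  have hDsplit : ∀ τ : ℝ, D (t - τ)
      = D (t - s) + ((∫ ρ in (0:ℝ)..s, d (t - ρ)) - ∫ ρ in (0:ℝ)..τ, d (t - ρ)) := by
    intro τ
    have h1 : (∫ ρ in τ..s, d (t - ρ)) = ∫ ρ in (t - s)..(t - τ), d ρ :=
      intervalIntegral.integral_comp_sub_left d t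
    have h2 : (∫ ρ in (t - s)..(t - τ), d ρ) = D (t - τ) - D (t - s) :=
      (intervalIntegral.integral_interval_sub_left (hd_ii 0 (t - τ)) (hd_ii 0 (t - s))).symm
    have h3 : (∫ ρ in τ..s, d (t - ρ))
        = (∫ ρ in (0:ℝ)..s, d (t - ρ)) - ∫ ρ in (0:ℝ)..τ, d (t - ρ) :=
      (intervalIntegral.integral_interval_sub_left (hdt_ii 0 s) (hdt_ii 0 τ)).symm
    have h4 : D (t - τ) - D (t - s)
        = (∫ ρ in (0:ℝ)..s, d (t - ρ)) - ∫ ρ in (0:ℝ)..τ, d (t - ρ) := by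
      rw [← h2, ← h1, h3]
    rw [← h4]
    abel
  -- expand the integral
  have expand : (∫ τ in (0:ℝ)..s,
        (a τ ⬝ᵥ qt' (t - τ) - (P 0 + ∫ ρ in (0:ℝ)..τ, a ρ) ⬝ᵥ d (t - τ)))
      = (((∫ τ in (0:ℝ)..s, a τ ⬝ᵥ q 0)
          + ((∫ τ in (0:ℝ)..s, a τ ⬝ᵥ D (t - s))
            + ((∫ τ in (0:ℝ)..s, a τ ⬝ᵥ (∫ ρ in (0:ℝ)..s, d (t - ρ)))
              - ∫ τ in (0:ℝ)..s, a τ ⬝ᵥ ∫ ρ in (0:ℝ)..τ, d (t - ρ))))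
        - ((∫ τ in (0:ℝ)..s, P 0 ⬝ᵥ d (t - τ))
          + ∫ τ in (0:ℝ)..s, (∫ ρ in (0:ℝ)..τ, a ρ) ⬝ᵥ d (t - τ))) := by
    rw [← intervalIntegral.integral_sub jEs j5,
      ← intervalIntegral.integral_add jDts (jEs.sub j5),
      ← intervalIntegral.integral_add j1 (jDts.add (jEs.sub j5)),
      ← intervalIntegral.integral_add j3 j4,
      ← intervalIntegral.integral_sub ((j1.add (jDts.add (jEs.sub j5)))) (j3.add j4)]
    refine intervalIntegral.integral_congr fun τ _ => ?_
    have : qt' (t - τ) = q 0 + D (t - τ) := rfl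
    rw [this, hDsplit τ]
    simp only [dotProduct_add, add_dotProduct, dotProduct_sub]
    try ring
  rw [expand]
  -- evaluate the simple integrals
  have hI1 : (∫ τ in (0:ℝ)..s, a τ ⬝ᵥ q 0) = (∫ τ in (0:ℝ)..s, a τ) ⬝ᵥ q 0 := by
    rw [intervalIntegral.integral_congr (g := fun τ => q 0 ⬝ᵥ a τ)
      (fun τ _ => dotProduct_comm _ _), dot_intervalIntegral (q 0) haS, dotProduct_comm]
  have hI2 : (∫ τ in (0:ℝ)..s, a τ ⬝ᵥ D (t - s)) = (∫ τ in (0:ℝ)..s, a τ) ⬝ᵥ D (t - s) := by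
    rw [intervalIntegral.integral_congr (g := fun τ => D (t - s) ⬝ᵥ a τ)
      (fun τ _ => dotProduct_comm _ _), dot_intervalIntegral (D (t - s)) haS, dotProduct_comm]
  have hI3 : (∫ τ in (0:ℝ)..s, a τ ⬝ᵥ (∫ ρ in (0:ℝ)..s, d (t - ρ)))
      = (∫ τ in (0:ℝ)..s, a τ) ⬝ᵥ (∫ ρ in (0:ℝ)..s, d (t - ρ)) := by
    rw [intervalIntegral.integral_congr (g := fun τ => (∫ ρ in (0:ℝ)..s, d (t - ρ)) ⬝ᵥ a τ)
      (fun τ _ => dotProduct_comm _ _),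
      dot_intervalIntegral (∫ ρ in (0:ℝ)..s, d (t - ρ)) haS, dotProduct_comm]
  have hI4 : (∫ τ in (0:ℝ)..s, P 0 ⬝ᵥ d (t - τ)) = P 0 ⬝ᵥ (D t - D (t - s)) := by
    rw [dot_intervalIntegral (P 0) (hdt_ii 0 s)]
    congr 1
    have h1 : (∫ τ in (0:ℝ)..s, d (t - τ)) = ∫ ρ in (t - s)..(t - 0), d ρ :=
      intervalIntegral.integral_comp_sub_left d t
    rw [h1, sub_zero]
    exact (intervalIntegral.integral_interval_sub_left (hd_ii 0 t) (hd_ii 0 (t - s))).symm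
  -- the Fubini identity
  have hsum : (∫ τ in (0:ℝ)..s, a τ ⬝ᵥ ∫ ρ in (0:ℝ)..τ, d (t - ρ))
      + (∫ τ in (0:ℝ)..s, (∫ ρ in (0:ℝ)..τ, a ρ) ⬝ᵥ d (t - τ))
      = (∫ τ in (0:ℝ)..s, a τ) ⬝ᵥ (∫ ρ in (0:ℝ)..s, d (t - ρ)) := by
    rw [← vecSP hs0 a (fun ρ => d (t - ρ)) haS (hdt_ii 0 s),
      intervalIntegral.integral_add j5 j4]
  -- final algebra
  rw [hI1, hI2, hI3, hI4, hP s ⟨hs0, hst⟩]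
  have hqts : qt' (t - s) = q 0 + D (t - s) := rfl
  have hqtt : qt' t = q 0 + D t := rfl
  rw [hqts, hqtt]
  simp only [dotProduct_add, add_dotProduct, dotProduct_sub]
  linarith [hsum]
end
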